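/- Let E be a compact Hausdorff extremally disconnected space containing a dense set D of isolated points. Then E is homeomorphic to the Čech–Stone compactification βD of the discrete space D; equivalently, every bounded continuous real-valued function on D extends continuously to E. -/

import Mathlib

private lemma disj_closure {E : Type*} [TopologicalSpace E] [ExtremallyDisconnected E]
    {A B : Set E} (hA : IsOpen A) (hB : IsOpen B) (hAB : Disjoint A B) :
    Disjoint (closure A) (closure B) := by
  have h1 : closure A ⊆ Bᶜ :=
    closure_minimal (hAB.subset_compl_right) hB.isClosed_compl
  have h2 : IsOpen (closure A) := ExtremallyDisconnected.open_closure A hA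
  have h3 : closure B ⊆ (closure A)ᶜ :=
    closure_minimal (fun x hx hx' => h1 hx' hx) h2.isClosed_compl
  exact Set.disjoint_left.mpr fun x hx hx' => h3 hx' hx

theorem stmt_15 {E : Type*} [TopologicalSpace E] [CompactSpace E] [T2Space E]
    [ExtremallyDisconnected E]
    (D : Set E) (hiso : ∀ d ∈ D, IsOpen ({d} : Set E)) (hdense : Dense D) :
    (∃ h : StoneCech ↥D ≃ₜ E, ∀ d : ↥D, h (stoneCechUnit d) = (d : E)) ∧
    (∀ f : C(↥D, ℝ), (∃ M : ℝ, ∀ x : ↥D, |f x| ≤ M) →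
      ∃ g : C(E, ℝ), ∀ x : ↥D, g x = f x) := by
  -- D is discrete
  haveI : DiscreteTopology ↥D := discreteTopology_iff_isOpen_singleton.mpr <| by
    rintro ⟨d, hd⟩
    have : ({(⟨d, hd⟩ : ↥D)} : Set ↥D) = Subtype.val ⁻¹' {d} := by
      ext x; simp [Subtype.ext_iff]
    rw [this]
    exact (hiso d hd).preimage continuous_subtype_val
  -- subsets of D are open in E
  have openD : ∀ A : Set ↥D, IsOpen (Subtype.val '' A : Set E) := by
    intro A
    have : (Subtype.val '' A : Set E) = ⋃ x ∈ A, {(x : E)} := by ext; simp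
    rw [this]
    exact isOpen_biUnion fun x _ => hiso x x.2
  -- the extension φ
  have hval : Continuous (Subtype.val : ↥D → E) := continuous_subtype_val
  set φ : StoneCech ↥D → E := stoneCechExtend hval with hφdef
  have hφc : Continuous φ := continuous_stoneCechExtend hval
  have hφu : ∀ d : ↥D, φ (stoneCechUnit d) = (d : E) := fun d =>
    congrFun (stoneCechExtend_extends hval) d
  -- surjectivity
  have hsurj : Function.Surjective φ := by
    have hcl : IsClosed (Set.range φ) := (isCompact_range hφc).isClosed
    have hD : D ⊆ Set.range φ := by
      rintro x hx
      exact ⟨stoneCechUnit ⟨x, hx⟩, hφu ⟨x, hx⟩⟩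
    have : Dense (Set.range φ) := hdense.mono hD
    intro e
    have : Set.range φ = Set.univ := hcl.closure_eq ▸ this.closure_eq
    exact (Set.eq_univ_iff_forall.mp this e).imp fun _ h => h
  -- injectivity
  have hinj : Function.Injective φ := by
    intro x y hxy
    by_contra hne
    obtain ⟨U, V, hU, hV, hxU, hyV, hUV⟩ := t2_separation hne
    set A := stoneCechUnit ⁻¹' U with hA
    set B := stoneCechUnit ⁻¹' V with hB
    have hmemc : ∀ (W : Set (StoneCech ↥D)), IsOpen W → ∀ z ∈ W,
        φ z ∈ closure (Subtype.val '' (stoneCechUnit ⁻¹' W) : Set E) := by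
      intro W hW z hz
      have h1 : z ∈ closure (W ∩ Set.range (stoneCechUnit : ↥D → StoneCech ↥D)) :=
        denseRange_stoneCechUnit.open_subset_closure_inter hW hz
      have h2 : W ∩ Set.range (stoneCechUnit : ↥D → StoneCech ↥D)
          = stoneCechUnit '' (stoneCechUnit ⁻¹' W) :=
        (Set.image_preimage_eq_inter_range).symm
      rw [h2] at h1
      have h3 : φ z ∈ φ '' closure (stoneCechUnit '' (stoneCechUnit ⁻¹' W)) :=
        ⟨z, h1, rfl⟩
      have h4 := image_closure_subset_closure_image (f := φ)
        (s := stoneCechUnit '' (stoneCechUnit ⁻¹' W)) hφc h3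
      have h5 : φ '' (stoneCechUnit '' (stoneCechUnit ⁻¹' W))
          = Subtype.val '' (stoneCechUnit ⁻¹' W) := by
        rw [← Set.image_comp, stoneCechExtend_extends hval]
      rwa [h5] at h4
    have hxA := hmemc U hU x hxU
    have hyB := hmemc V hV y hyV
    have hAB : Disjoint (Subtype.val '' A : Set E) (Subtype.val '' B) :=
      Set.disjoint_image_of_injective Subtype.val_injective (hUV.preimage _)
    have := disj_closure (openD A) (openD B) hAB
    exact this.ne_of_mem hxA hyB hxy
  -- the homeomorphism
  let e : StoneCech ↥D ≃ E := Equiv.ofBijective φ ⟨hinj, hsurj⟩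
  have hec : Continuous (e : StoneCech ↥D → E) := hφc
  let h : StoneCech ↥D ≃ₜ E := Continuous.homeoOfEquivCompactToT2 hec
  constructor
  · exact ⟨h, hφu⟩
  · rintro f ⟨M, hM⟩
    set M' := |M| with hM'def
    have hM' : ∀ x : ↥D, f x ∈ Set.Icc (-M') M' := by
      intro x
      have := (hM x).trans (le_abs_self M)
      exact ⟨neg_le_of_abs_le this, le_of_abs_le this⟩
    haveI : CompactSpace ↥(Set.Icc (-M') M') :=
      isCompact_iff_compactSpace.mp isCompact_Icc
    let f' : ↥D → ↥(Set.Icc (-M') M') := fun x => ⟨f x, hM' x⟩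
    have hf' : Continuous f' := continuous_of_discreteTopology
    let F := stoneCechExtend hf'
    refine ⟨⟨fun x => (F (h.symm x) : ℝ), ?_⟩, ?_⟩
    · exact continuous_subtype_val.comp ((continuous_stoneCechExtend hf').comp
        h.symm.continuous)
    · intro x
      have h1 : h.symm (x : E) = stoneCechUnit x := by
        apply h.injective
        rw [h.apply_symm_apply]
        exact (hφu x).symm
      simp only [ContinuousMap.coe_mk, h1]
      have := congrFun (stoneCechExtend_extends hf') x
      simp only [Function.comp_apply] at this
      rw [show F (stoneCechUnit x) = f' x from this]
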